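/- The matrix group generated by the 2×2 Pauli matrices σ_x and σ_y is isomorphic to the group ⟨P₀, P₁, J | P₀², P₁², J², [J,P₀], [J,P₁], J(P₀P₁)²⟩, which is the dihedral group of order 8. -/

import Mathlib

open Matrix Complex

noncomputable def sigmaX : Matrix (Fin 2) (Fin 2) ℂ := !![0, 1; 1, 0]
noncomputable def sigmaY : Matrix (Fin 2) (Fin 2) ℂ := !![0, -Complex.I; Complex.I, 0]

/-- Relations for `G₂ = ⟨P₀, P₁, J | P₀², P₁², J², [J,P₀], [J,P₁], J(P₀P₁)²⟩`,
with generators `0 ↦ P₀`, `1 ↦ P₁`, `2 ↦ J`. -/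
def g2Rels : Set (FreeGroup (Fin 3)) :=
  {w | w = (FreeGroup.of 0) ^ 2 ∨ w = (FreeGroup.of 1) ^ 2 ∨ w = (FreeGroup.of 2) ^ 2 ∨
    w = (FreeGroup.of 2) * (FreeGroup.of 0) * (FreeGroup.of 2)⁻¹ * (FreeGroup.of 0)⁻¹ ∨
    w = (FreeGroup.of 2) * (FreeGroup.of 1) * (FreeGroup.of 2)⁻¹ * (FreeGroup.of 1)⁻¹ ∨
    w = (FreeGroup.of 2) * ((FreeGroup.of 0) * (FreeGroup.of 1)) ^ 2}

namespace Stmt9Aux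

/-! ### A generic monoid hom out of `DihedralGroup 4` -/

section Generic
variable {M : Type*} [Monoid M] (A Z : M)

/-- map `r i ↦ Z ^ i.val`, `sr i ↦ A * Z ^ i.val`. -/
def d4fun : DihedralGroup 4 → M
  | .r i => Z ^ i.val
  | .sr i => A * Z ^ i.val

@[simp] lemma d4fun_r (i : ZMod 4) : d4fun A Z (.r i) = Z ^ i.val := rfl
@[simp] lemma d4fun_sr (i : ZMod 4) : d4fun A Z (.sr i) = A * Z ^ i.val := rfl

variable {A Z} (hA : A * A = 1) (hZ4 : Z ^ 4 = 1) (hZAZ : Z * A * Z = A)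

include hZ4 hZAZ in
lemma swapZA : Z * A = A * Z ^ 3 := by
  have : Z * A * (Z * Z ^ 3) = Z * A := by
    rw [← pow_succ' Z 3, hZ4, mul_one]
  calc Z * A = Z * A * Z * Z ^ 3 := by rw [mul_assoc (Z*A), this]
    _ = A * Z ^ 3 := by rw [hZAZ]

include hZ4 hZAZ in
lemma swapZA_pow (m : ℕ) : Z ^ m * A = A * Z ^ (3 * m) := by
  induction m with
  | zero => simp
  | succ n ih =>
    rw [pow_succ, mul_assoc, swapZA hZ4 hZAZ, ← mul_assoc, ih, mul_assoc, ← pow_add,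
      Nat.mul_succ]

lemma val_dec1 : ∀ i j : ZMod 4, (j - i).val % 4 = (3 * i.val + j.val) % 4 := by decide

lemma val_dec2 : ∀ i j : ZMod 4, (i + j).val % 4 = (i.val + j.val) % 4 := by decide

/-- The monoid homomorphism `DihedralGroup 4 →* M` determined by `A`, `Z`. -/
def d4Hom {M : Type*} [Monoid M] {A Z : M} (hA : A * A = 1) (hZ4 : Z ^ 4 = 1)
    (hZAZ : Z * A * Z = A) : DihedralGroup 4 →* M where
  toFun := d4fun A Z
  map_one' := by
    show Z ^ (0 : ZMod 4).val = 1
    simp [ZMod.val_zero]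
  map_mul' g h := by
    have hmod : ∀ n : ℕ, Z ^ n = Z ^ (n % 4) := fun n => pow_eq_pow_mod n hZ4
    cases g with
    | r i =>
      cases h with
      | r j =>
        rw [DihedralGroup.r_mul_r]
        simp only [d4fun_r]
        rw [← pow_add, hmod (i+j).val, hmod (i.val + j.val), val_dec2]
      | sr j =>
        rw [DihedralGroup.r_mul_sr]
        simp only [d4fun_r, d4fun_sr]
        rw [← mul_assoc, swapZA_pow hZ4 hZAZ, mul_assoc, ← pow_add,
          hmod (j - i).val, hmod (3 * i.val + j.val), val_dec1]
    | sr i =>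
      cases h with
      | r j =>
        rw [DihedralGroup.sr_mul_r]
        simp only [d4fun_r, d4fun_sr]
        rw [mul_assoc, ← pow_add, hmod (i+j).val, hmod (i.val + j.val), val_dec2]
      | sr j =>
        rw [DihedralGroup.sr_mul_sr]
        simp only [d4fun_r, d4fun_sr]
        rw [mul_assoc, ← mul_assoc (Z ^ i.val), swapZA_pow hZ4 hZAZ,
          ← mul_assoc, ← mul_assoc, hA, one_mul, ← pow_add,
          hmod (j - i).val, hmod (3 * i.val + j.val), val_dec1]

@[simp] lemma d4Hom_r (i : ZMod 4) : d4Hom hA hZ4 hZAZ (.r i) = Z ^ i.val := rfl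
@[simp] lemma d4Hom_sr (i : ZMod 4) : d4Hom hA hZ4 hZAZ (.sr i) = A * Z ^ i.val := rfl

end Generic

/-! ### The matrix side -/

noncomputable def Zm : Matrix (Fin 2) (Fin 2) ℂ := sigmaX * sigmaY

lemma Zm_eq : Zm = !![Complex.I, 0; 0, -Complex.I] := by
  ext i j
  fin_cases i <;> fin_cases j <;>
    simp [Zm, sigmaX, sigmaY, Matrix.mul_apply, Fin.sum_univ_two]

lemma hX2 : sigmaX * sigmaX = 1 := by
  ext i j
  fin_cases i <;> fin_cases j <;>
    simp [sigmaX, Matrix.mul_apply, Fin.sum_univ_two, Matrix.one_apply]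

lemma hZZ : Zm * Zm = -1 := by
  rw [Zm_eq]
  ext i j
  fin_cases i <;> fin_cases j <;>
    simp [Matrix.mul_apply, Fin.sum_univ_two, Matrix.one_apply, Complex.ext_iff]

lemma hZ2 : Zm ^ 2 = -1 := by rw [pow_two, hZZ]

lemma hZ3 : Zm ^ 3 = -Zm := by
  rw [pow_succ, hZ2, neg_one_mul]

lemma hZ4 : Zm ^ 4 = 1 := by
  rw [show (4:ℕ) = 2*2 from rfl, pow_mul, hZ2, neg_one_sq]

lemma hZXZ : Zm * sigmaX * Zm = sigmaX := by
  rw [Zm_eq]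
  ext i j
  fin_cases i <;> fin_cases j <;>
    simp [sigmaX, Matrix.mul_apply, Fin.sum_univ_two, Complex.ext_iff]

lemma hXZ : sigmaX * Zm = sigmaY := by
  rw [Zm_eq]
  ext i j
  fin_cases i <;> fin_cases j <;>
    simp [sigmaX, sigmaY, Matrix.mul_apply, Fin.sum_univ_two]

lemma Zm_ne_one : Zm ≠ 1 := by
  intro h
  have := congrFun (congrFun (Zm_eq ▸ h) 0) 0
  simp [Matrix.one_apply, Complex.ext_iff] at this

lemma neg_one_ne_one : (-1 : Matrix (Fin 2) (Fin 2) ℂ) ≠ 1 := by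
  intro h
  have := congrFun (congrFun h 0) 0
  norm_num [Matrix.one_apply] at this

lemma neg_Zm_ne_one : -Zm ≠ 1 := by
  intro h
  have := congrFun (congrFun (Zm_eq ▸ h) 0) 0
  simp [Matrix.one_apply, Complex.ext_iff] at this

lemma sigmaX_ne_one : sigmaX ≠ 1 := by
  intro h
  have := congrFun (congrFun h 0) 1
  simp [sigmaX, Matrix.one_apply] at this

lemma sigmaY_ne_one : sigmaY ≠ 1 := by
  intro h
  have := congrFun (congrFun h 0) 1
  simp [sigmaY, Matrix.one_apply, Complex.ext_iff] at this

lemma neg_sigmaX_ne_one : -sigmaX ≠ 1 := by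
  intro h
  have := congrFun (congrFun h 0) 1
  norm_num [sigmaX, Matrix.one_apply] at this

lemma neg_sigmaY_ne_one : -sigmaY ≠ 1 := by
  intro h
  have := congrFun (congrFun h 0) 1
  simp [sigmaY, Matrix.one_apply, Complex.ext_iff] at this

/-- `sigmaX` as a unit. -/
noncomputable def XU : (Matrix (Fin 2) (Fin 2) ℂ)ˣ := ⟨sigmaX, sigmaX, hX2, hX2⟩

/-- `Zm` as a unit. -/
noncomputable def ZU : (Matrix (Fin 2) (Fin 2) ℂ)ˣ :=
  ⟨Zm, Zm ^ 3, by rw [← pow_succ' Zm 3, hZ4], by rw [← pow_succ Zm 3, hZ4]⟩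

lemma hXU2 : XU * XU = 1 := Units.ext hX2
lemma hZU4 : ZU ^ 4 = 1 := Units.ext (by rw [Units.val_pow_eq_pow_val]; exact hZ4)
lemma hZXZU : ZU * XU * ZU = XU := Units.ext hZXZ

/-- The hom `DihedralGroup 4 →* units`. -/
noncomputable def ΨU : DihedralGroup 4 →* (Matrix (Fin 2) (Fin 2) ℂ)ˣ :=
  d4Hom hXU2 hZU4 hZXZU

lemma ΨU_injective : Function.Injective ΨU := by
  have v1 : (1 : ZMod 4).val = 1 := by decide
  have v2 : (2 : ZMod 4).val = 2 := by decide
  have v3 : (3 : ZMod 4).val = 3 := by decide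
  rw [injective_iff_map_eq_one]
  rintro (i | i) h
  · fin_cases i
    · rfl
    · exact absurd (congrArg Units.val h) (by simpa [ΨU, ZU, v1, d4Hom, d4fun, ZMod.val] using Zm_ne_one)
    · refine absurd (congrArg Units.val h) ?_
      simpa [ΨU, ZU, v2, hZ2, d4Hom, d4fun, ZMod.val] using neg_one_ne_one
    · refine absurd (congrArg Units.val h) ?_
      simpa [ΨU, ZU, v3, hZ3, d4Hom, d4fun, ZMod.val] using neg_Zm_ne_one
  · fin_cases i <;> refine absurd (congrArg Units.val h) ?_
    · simpa [ΨU, ZU, XU, d4Hom, d4fun, ZMod.val] using sigmaX_ne_one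
    · simpa [ΨU, ZU, XU, v1, hXZ, d4Hom, d4fun, ZMod.val] using sigmaY_ne_one
    · have h2 : sigmaX * Zm ^ 2 = -sigmaX := by rw [hZ2]; simp
      simpa [ΨU, ZU, XU, v2, h2, d4Hom, d4fun, ZMod.val] using neg_sigmaX_ne_one
    · have h3 : sigmaX * Zm ^ 3 = -sigmaY := by rw [hZ3, mul_neg, hXZ]
      simpa [ΨU, ZU, XU, v3, h3, d4Hom, d4fun, ZMod.val] using neg_sigmaY_ne_one

/-- The hom into the matrix monoid. -/
noncomputable def ΦM : DihedralGroup 4 →* Matrix (Fin 2) (Fin 2) ℂ :=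
  (Units.coeHom _).comp ΨU

lemma ΦM_r (i : ZMod 4) : ΦM (.r i) = Zm ^ i.val := by
  simp [ΦM, ΨU, ZU]

lemma ΦM_sr (i : ZMod 4) : ΦM (.sr i) = sigmaX * Zm ^ i.val := by
  simp [ΦM, ΨU, ZU, XU]

lemma ΦM_injective : Function.Injective ΦM :=
  Units.val_injective.comp ΨU_injective

lemma ΦM_mrange : MonoidHom.mrange ΦM = Submonoid.closure {sigmaX, sigmaY} := by
  apply le_antisymm
  · rintro x ⟨g, rfl⟩
    have hxm : sigmaX ∈ Submonoid.closure {sigmaX, sigmaY} :=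
      Submonoid.subset_closure (Set.mem_insert _ _)
    have hym : sigmaY ∈ Submonoid.closure {sigmaX, sigmaY} :=
      Submonoid.subset_closure (Set.mem_insert_of_mem _ rfl)
    have hzm : Zm ∈ Submonoid.closure {sigmaX, sigmaY} := mul_mem hxm hym
    cases g with
    | r i => rw [ΦM_r]; exact pow_mem hzm _
    | sr i => rw [ΦM_sr]; exact mul_mem hxm (pow_mem hzm _)
  · rw [Submonoid.closure_le]
    rintro x (rfl | rfl)
    · exact ⟨DihedralGroup.sr 0, by rw [ΦM_sr]; simp [ZMod.val_zero]⟩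
    · refine ⟨DihedralGroup.sr 1, ?_⟩
      rw [ΦM_sr, show (1 : ZMod 4).val = 1 from rfl, pow_one, hXZ]

/-- `closure {σx, σy} ≃* D4`. -/
noncomputable def closureEquivD4 :
    (Submonoid.closure {sigmaX, sigmaY} : Submonoid (Matrix (Fin 2) (Fin 2) ℂ))
      ≃* DihedralGroup 4 := by
  refine ((MulEquiv.submonoidCongr ΦM_mrange).symm.trans ?_)
  exact (MulEquiv.ofBijective ΦM.mrangeRestrict
    ⟨fun a b hab => ΦM_injective (by simpa [Subtype.ext_iff] using hab),
      ΦM.mrangeRestrict_surjective⟩).symm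

/-! ### The presented group side -/

local notation "G" => PresentedGroup g2Rels

lemma rel_mk {w : FreeGroup (Fin 3)} (h : w ∈ g2Rels) : PresentedGroup.mk g2Rels w = 1 :=
  (QuotientGroup.eq_one_iff w).2 (Subgroup.subset_normalClosure h)

noncomputable def ga : G := PresentedGroup.of 0
noncomputable def gb : G := PresentedGroup.of 1
noncomputable def gc : G := PresentedGroup.of 2
noncomputable def gx : G := ga * gb

lemma hga : ga * ga = 1 := by
  have h := rel_mk (Or.inl rfl)
  rw [map_pow, pow_two] at h
  exact h

lemma hgb : gb * gb = 1 := by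
  have h := rel_mk (Or.inr (Or.inl rfl))
  rw [map_pow, pow_two] at h
  exact h

lemma hgc : gc * gc = 1 := by
  have h := rel_mk (Or.inr (Or.inr (Or.inl rfl)))
  rw [map_pow, pow_two] at h
  exact h

lemma hrel6 : gc * gx ^ 2 = 1 := by
  have h := rel_mk (Or.inr (Or.inr (Or.inr (Or.inr (Or.inr rfl)))))
  rw [_root_.map_mul, map_pow, _root_.map_mul] at h
  exact h

lemma hgx2 : gx ^ 2 = gc := by
  have h1 : (gx ^ 2)⁻¹ = gc := inv_eq_of_mul_eq_one_left hrel6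
  have h2 : gc⁻¹ = gc := inv_eq_of_mul_eq_one_right hgc
  rw [← h2, ← h1, inv_inv]

lemma hgx4 : gx ^ 4 = 1 := by
  rw [show (4:ℕ) = 2*2 from rfl, pow_mul, hgx2, pow_two, hgc]

lemma hxax : gx * ga * gx = ga := by
  have ha2 : ∀ y : G, ga * (ga * y) = y := fun y => by rw [← mul_assoc, hga, one_mul]
  show ga * gb * ga * (ga * gb) = ga
  rw [mul_assoc (ga * gb), ha2, mul_assoc, hgb, mul_one]

/-- The hom `DihedralGroup 4 →* G`. -/
noncomputable def ι : DihedralGroup 4 →* G := d4Hom hga hgx4 hxax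

/-- The generator images in `DihedralGroup 4`. -/
def fgen : Fin 3 → DihedralGroup 4
  | 0 => .sr 0
  | 1 => .sr 1
  | 2 => .r 2

lemma fgen_rels : ∀ r ∈ g2Rels, FreeGroup.lift fgen r = 1 := by
  rintro w (rfl | rfl | rfl | rfl | rfl | rfl) <;>
    simp only [_root_.map_mul, map_pow, _root_.map_inv, FreeGroup.lift_apply_of] <;> decide

/-- The hom `G →* DihedralGroup 4`. -/
noncomputable def φ : G →* DihedralGroup 4 := PresentedGroup.toGroup fgen_rels

lemma φ_ga : φ ga = .sr 0 := PresentedGroup.toGroup.of fgen_rels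
lemma φ_gb : φ gb = .sr 1 := PresentedGroup.toGroup.of fgen_rels
lemma φ_gc : φ gc = .r 2 := PresentedGroup.toGroup.of fgen_rels

lemma φ_gx : φ gx = .r 1 := by
  rw [gx, _root_.map_mul, φ_ga, φ_gb, DihedralGroup.sr_mul_sr]
  norm_num

lemma comp1 : φ.comp ι = MonoidHom.id (DihedralGroup 4) := by
  apply MonoidHom.ext
  rintro (i | i)
  · show φ (gx ^ i.val) = _
    rw [map_pow, φ_gx, DihedralGroup.r_one_pow]
    rw [ZMod.natCast_rightInverse i]
    rfl
  · show φ (ga * gx ^ i.val) = _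
    rw [_root_.map_mul, map_pow, φ_ga, φ_gx, DihedralGroup.r_one_pow, DihedralGroup.sr_mul_r,
      ZMod.natCast_rightInverse i]
    rw [zero_add]
    rfl

lemma comp2 : ι.comp φ = MonoidHom.id G := by
  apply PresentedGroup.ext
  intro i
  fin_cases i
  · show ι (φ ga) = ga
    rw [φ_ga]
    show ga * gx ^ (0 : ZMod 4).val = ga
    simp [ZMod.val_zero]
  · show ι (φ gb) = gb
    rw [φ_gb]
    show ga * gx ^ (1 : ZMod 4).val = gb
    rw [show (1 : ZMod 4).val = 1 by decide, pow_one, gx, ← mul_assoc, hga, one_mul]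
  · show ι (φ gc) = gc
    rw [φ_gc]
    show gx ^ (2 : ZMod 4).val = gc
    rw [show (2 : ZMod 4).val = 2 by decide, hgx2]

/-- `G ≃* DihedralGroup 4`. -/
noncomputable def presentedEquivD4 : G ≃* DihedralGroup 4 :=
  φ.toMulEquiv ι comp2 comp1

end Stmt9Aux

theorem stmt_9 :
    Nonempty ((Submonoid.closure {sigmaX, sigmaY} : Submonoid (Matrix (Fin 2) (Fin 2) ℂ))
        ≃* PresentedGroup g2Rels) ∧
      Nonempty (PresentedGroup g2Rels ≃* DihedralGroup 4) := by
  exact ⟨⟨Stmt9Aux.closureEquivD4.trans Stmt9Aux.presentedEquivD4.symm⟩,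
    ⟨Stmt9Aux.presentedEquivD4⟩⟩
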